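/- For any graph G, α(G) ≤ max{k ∈ ℤ | Σ_{i=1}^k d_i + C(χ(G)−1, 2) ≤ m(G)}, where χ(G) is the chromatic number. -/

import Mathlib

open Finset

namespace DSI

variable {V : Type*} (G : SimpleGraph V) [Fintype V] [DecidableEq V] [DecidableRel G.Adj]

/-- The degree sequence of `G`, sorted in non-decreasing order. -/
def dseq : List ℕ := (Finset.univ.val.map (fun v => G.degree v)).sort (· ≤ ·)

/-- The sum of the `k` smallest degrees, `Σ_{i=1}^k d_i`. -/
def sumSmallest (k : ℕ) : ℕ := ((dseq G).take k).sum

/-- The sum of the `k` largest degrees, `Σ_{i=1}^k d_{n-i+1}`. -/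
def sumLargest (k : ℕ) : ℕ := ((dseq G).reverse.take k).sum

/-- The number of edges `m(G)`. -/
def esize : ℕ := G.edgeFinset.card

/-- `m[S]`: the number of edges of the subgraph induced by `S`. -/
def mOn (S : Finset V) : ℕ := (S.sym2.filter (fun e => e ∈ G.edgeSet)).card

/-- A set `I` is `j`-independent if every vertex of `I` has fewer than `j` neighbours in `I`,
i.e. the induced subgraph has maximum degree `< j`. -/
def JIndep (j : ℕ) (I : Finset V) : Prop := ∀ v ∈ I, (I.filter (G.Adj v)).card < j

/-- The `j`-independence number `α_j(G)`. -/
noncomputable def alphaJ (j : ℕ) : ℕ := sSup {k | ∃ I : Finset V, JIndep G j I ∧ I.card = k}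

/-- The family `F` of maximum `j`-independent sets. -/
noncomputable def maxJIndep (j : ℕ) : Set (Finset V) :=
  {S | JIndep G j S ∧ S.card = alphaJ G j}

/-- `max_{S ∈ F} (m[V−S] − m[S])`. -/
noncomputable def fU (j : ℕ) : ℤ :=
  sSup ((fun S : Finset V => (mOn G Sᶜ : ℤ) - (mOn G S : ℤ)) '' maxJIndep G j)

/-- `min_{S ∈ F} (m[V−S] − m[S])`. -/
noncomputable def fL (j : ℕ) : ℤ :=
  sInf ((fun S : Finset V => (mOn G Sᶜ : ℤ) - (mOn G S : ℤ)) '' maxJIndep G j)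

/-- The upper `j`-annihilation number `a_j(G)`. -/
noncomputable def aJ (j : ℕ) : ℕ :=
  sSup {k | k ≤ Fintype.card V ∧ (sumSmallest G k : ℤ) + fU G j ≤ (esize G : ℤ)}

/-- The lower `j`-annihilation number `c_j(G)`. -/
noncomputable def cJ (j : ℕ) : ℕ :=
  sInf {k | k ≤ Fintype.card V ∧ (esize G : ℤ) ≤ (sumLargest G k : ℤ) + fL G j}

/-- The annihilation number `a(G)`. -/
noncomputable def annihilation : ℕ :=
  sSup {k | k ≤ Fintype.card V ∧ sumSmallest G k ≤ esize G}

/-- An independent set. -/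
def IndepSet (I : Finset V) : Prop := ∀ v ∈ I, ∀ w ∈ I, ¬ G.Adj v w

/-- The independence number `α(G)`. -/
noncomputable def alpha : ℕ := sSup {k | ∃ I : Finset V, IndepSet G I ∧ I.card = k}

end DSI
/-- The `j`-chromatic number `χ_j(G)`: the fewest number of `j`-independent sets that
the vertex set can be partitioned into (as colour classes of a colouring). -/
noncomputable def DSI.chiJ {V : Type*} (G : SimpleGraph V) [Fintype V]
    [DecidableEq V] [DecidableRel G.Adj] (j : ℕ) : ℕ :=
  sInf {t | ∃ f : V → Fin t, ∀ c : Fin t,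
    DSI.JIndep G j (Finset.univ.filter (fun v => f v = c))}

private lemma take_sum_le : ∀ {l₁ l₂ : List ℕ}, List.Sublist l₁ l₂ → l₂.Pairwise (· ≤ ·) →
    (l₂.take l₁.length).sum ≤ l₁.sum := by
  intro l₁ l₂ h
  induction h with
  | slnil => intro _; simp
  | @cons l₁ l₂ a h ih =>
    intro hs
    rw [List.pairwise_cons] at hs
    cases hn : l₁.length with
    | zero => simp
    | succ m =>
      have hm : m < l₂.length := by have := h.length_le; omega
      have h2 : (l₂.take (m + 1)).sum = (l₂.take m).sum + l₂[m] := by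
        rw [List.take_succ, List.sum_append, List.getElem?_eq_getElem hm]
        rfl
      have ha : a ≤ l₂[m] := hs.1 _ (List.getElem_mem hm)
      have hih := ih hs.2
      rw [hn] at hih
      rw [List.take_succ_cons, List.sum_cons]
      omega
  | @cons_cons l₁ l₂ a h ih =>
    intro hs
    rw [List.pairwise_cons] at hs
    simpa using Nat.add_le_add_left (ih hs.2) a

private lemma descend_coloring {V : Type*} (G : SimpleGraph V) (I : Finset V)
    {n : ℕ} (f : V → Fin (n + 1))
    (hf : ∀ v w : V, v ∉ I → w ∉ I → G.Adj v w → f v ≠ f w)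
    (c c' : Fin (n + 1)) (hcc' : c ≠ c')
    (hno : ∀ v w : V, v ∉ I → w ∉ I → G.Adj v w → s(f v, f w) ≠ s(c, c')) :
    ∃ g : V → Fin n, ∀ v w : V, v ∉ I → w ∉ I → G.Adj v w → g v ≠ g w := by
  classical
  set f' : V → Fin (n + 1) := fun v => if f v = c' then c else f v with hf'
  have hne : ∀ v, f' v ≠ c' := by
    intro v; simp only [hf']; split
    · exact hcc'
    · assumption
  have hsome : ∀ v, (finSuccEquiv' c' (f' v)).isSome := by
    intro v
    rcases h : finSuccEquiv' c' (f' v) with _ | d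
    · exact absurd ((finSuccEquiv' c').injective (h.trans (finSuccEquiv'_at c').symm)) (hne v)
    · rfl
  refine ⟨fun v => ((finSuccEquiv' c') (f' v)).get (hsome v), ?_⟩
  intro v w hv hw hadj heq
  have h1 : f' v = f' w := by
    apply (finSuccEquiv' c').injective
    rw [← Option.some_get (hsome v), ← Option.some_get (hsome w)]
    exact congrArg some heq
  by_cases h2 : f v = c' <;> by_cases h3 : f w = c'
  · exact hf v w hv hw hadj (h2.trans h3.symm)
  · simp only [hf', if_pos h2, if_neg h3] at h1
    exact hno v w hv hw hadj (by rw [h2, ← h1]; exact Sym2.eq_swap)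
  · simp only [hf', if_neg h2, if_pos h3] at h1
    exact hno v w hv hw hadj (by rw [h3, h1])
  · simp only [hf', if_neg h2, if_neg h3] at h1
    exact hf v w hv hw hadj h1

private lemma sumSmallest_le_sum {V : Type*} (G : SimpleGraph V) [Fintype V]
    [DecidableEq V] [DecidableRel G.Adj] (I : Finset V) :
    DSI.sumSmallest G I.card ≤ ∑ v ∈ I, G.degree v := by
  classical
  set s : Multiset ℕ := I.val.map (fun v => G.degree v) with hsdef
  set t : Multiset ℕ := Finset.univ.val.map (fun v => G.degree v) with htdef
  have hst : s ≤ t := Multiset.map_le_map (Finset.val_le_iff.mpr (Finset.subset_univ I))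
  have hsub : (s.sort (· ≤ ·)).Sublist (t.sort (· ≤ ·)) := by
    apply List.sublist_of_subperm_of_pairwise _ (Multiset.pairwise_sort _ _) (Multiset.pairwise_sort _ _)
    rw [← Multiset.coe_le, Multiset.sort_eq, Multiset.sort_eq]
    exact hst
  have hlen : (s.sort (· ≤ ·)).length = I.card := by
    rw [Multiset.length_sort, Multiset.card_map]; rfl
  have := take_sum_le hsub (Multiset.pairwise_sort _ _)
  rw [hlen] at this
  calc DSI.sumSmallest G I.card = ((t.sort (· ≤ ·)).take I.card).sum := rfl
    _ ≤ (s.sort (· ≤ ·)).sum := this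
    _ = s.sum := by rw [← Multiset.sum_coe, Multiset.sort_eq]
    _ = ∑ v ∈ I, G.degree v := rfl


private lemma pairs_le {V : Type*} (G : SimpleGraph V) [Fintype V]
    [DecidableEq V] [DecidableRel G.Adj] (I : Finset V)
    {s₀ : ℕ} (f₀ : V → Fin s₀)
    (hf₀ : ∀ v w : V, v ∉ I → w ∉ I → G.Adj v w → f₀ v ≠ f₀ w)
    (hmin : ∀ m : ℕ, (∃ g : V → Fin m,
      ∀ v w : V, v ∉ I → w ∉ I → G.Adj v w → g v ≠ g w) → s₀ ≤ m) :
    s₀.choose 2 ≤ (G.edgeFinset.filter (fun e => ∀ v ∈ I, v ∉ e)).card := by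
  classical
  cases s₀ with
  | zero => simp
  | succ n =>
    set B := G.edgeFinset.filter (fun e => ∀ v ∈ I, v ∉ e) with hB
    have hsurj : Set.SurjOn (Sym2.map f₀) ↑B
        ↑((⊤ : SimpleGraph (Fin (n + 1))).edgeFinset) := by
      intro p hp
      rw [Finset.mem_coe, SimpleGraph.mem_edgeFinset] at hp
      induction p using Sym2.ind with
      | _ c c' =>
      have hcc' : c ≠ c' := by
        rw [SimpleGraph.mem_edgeSet] at hp
        exact hp
      by_contra hcon
      have hno : ∀ v w : V, v ∉ I → w ∉ I → G.Adj v w → s(f₀ v, f₀ w) ≠ s(c, c') := by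
        intro v w hv hw hadj hmap
        apply hcon
        refine ⟨s(v, w), ?_, by rw [Sym2.map_pair_eq, hmap]⟩
        rw [Finset.mem_coe, Finset.mem_filter]
        refine ⟨SimpleGraph.mem_edgeFinset.mpr ((SimpleGraph.mem_edgeSet G).mpr hadj), ?_⟩
        intro u huI hue
        rcases Sym2.mem_iff.mp hue with rfl | rfl
        · exact hv huI
        · exact hw huI
      obtain ⟨g, hg⟩ := descend_coloring G I f₀ hf₀ c c' hcc' hno
      have := hmin n ⟨g, hg⟩
      omega
    have h := Finset.card_le_card_of_surjOn _ hsurj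
    rwa [SimpleGraph.card_edgeFinset_top_eq_card_choose_two, Fintype.card_fin] at h

theorem alpha_chromatic_bound {V : Type*} (G : SimpleGraph V) [Fintype V]
    [DecidableEq V] [DecidableRel G.Adj] :
    DSI.alpha G ≤ sSup {k | k ≤ Fintype.card V ∧
      DSI.sumSmallest G k + (DSI.chiJ G 1 - 1).choose 2 ≤ DSI.esize G} := by
  classical
  set T := {k | k ≤ Fintype.card V ∧
      DSI.sumSmallest G k + (DSI.chiJ G 1 - 1).choose 2 ≤ DSI.esize G} with hT
  -- obtain a maximum independent set
  have hne : {k | ∃ I : Finset V, DSI.IndepSet G I ∧ I.card = k}.Nonempty :=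
    ⟨0, ∅, fun v hv => absurd hv (Finset.notMem_empty v), Finset.card_empty⟩
  have hbdd : BddAbove {k | ∃ I : Finset V, DSI.IndepSet G I ∧ I.card = k} := by
    refine ⟨Fintype.card V, ?_⟩
    rintro k ⟨I, _, rfl⟩
    exact Finset.card_le_univ I
  obtain ⟨I, hI, hIcard⟩ := Nat.sSup_mem hne hbdd
  rw [DSI.alpha, ← hIcard]
  -- the set of edges avoiding I
  set B := G.edgeFinset.filter (fun e => ∀ v ∈ I, v ∉ e) with hB
  -- edges incident to I
  have hbi : I.biUnion (fun v => G.incidenceFinset v) ⊆ G.edgeFinset \ B := by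
    intro e he
    rw [Finset.mem_biUnion] at he
    obtain ⟨v, hvI, hve⟩ := he
    rw [SimpleGraph.mem_incidenceFinset] at hve
    refine Finset.mem_sdiff.mpr ⟨SimpleGraph.mem_edgeFinset.mpr hve.1, fun hmB => ?_⟩
    exact (Finset.mem_filter.mp hmB).2 v hvI hve.2
  have hcard1 : ∑ v ∈ I, G.degree v = (I.biUnion (fun v => G.incidenceFinset v)).card := by
    rw [Finset.card_biUnion]
    · exact Finset.sum_congr rfl fun v _ => (G.card_incidenceFinset_eq_degree v).symm
    · intro v hv w hw hvw
      simp only [Function.onFun, Finset.disjoint_left]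
      intro e hev hew
      rw [SimpleGraph.mem_incidenceFinset] at hev hew
      exact hI v hv w hw (G.adj_of_mem_incidenceSet hvw hev hew)
  have hA : ∑ v ∈ I, G.degree v + B.card ≤ G.edgeFinset.card := by
    rw [hcard1]
    have h1 := Finset.card_le_card hbi
    have h2 := Finset.card_sdiff_add_card_eq_card (show B ⊆ G.edgeFinset from Finset.filter_subset _ _)
    omega
  -- the minimal number of colours to properly colour outside I
  set Sset := {s : ℕ | ∃ f : V → Fin s,
      ∀ v w : V, v ∉ I → w ∉ I → G.Adj v w → f v ≠ f w} with hSset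
  have hSne : Sset.Nonempty := by
    refine ⟨Fintype.card V, fun v => Fintype.equivFin V v, ?_⟩
    intro v w _ _ hadj hfeq
    exact hadj.ne ((Fintype.equivFin V).injective hfeq)
  set s₀ := sInf Sset with hs₀
  obtain ⟨f₀, hf₀⟩ : s₀ ∈ Sset := Nat.sInf_mem hSne
  -- chromatic number bound
  have hchi : DSI.chiJ G 1 ≤ s₀ + 1 := by
    apply Nat.sInf_le
    refine ⟨fun v => if v ∈ I then Fin.last s₀ else (f₀ v).castSucc, ?_⟩
    intro c v hv
    rw [Nat.lt_one_iff, Finset.card_eq_zero, Finset.filter_eq_empty_iff]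
    intro w hw hadj
    rw [Finset.mem_filter] at hv hw
    have hvw : (if v ∈ I then Fin.last s₀ else (f₀ v).castSucc)
        = (if w ∈ I then Fin.last s₀ else (f₀ w).castSucc) := hv.2.trans hw.2.symm
    by_cases h2 : v ∈ I <;> by_cases h3 : w ∈ I
    · exact hI v h2 w h3 hadj
    · rw [if_pos h2, if_neg h3] at hvw
      exact absurd hvw.symm (Fin.castSucc_lt_last (f₀ w)).ne
    · rw [if_neg h2, if_pos h3] at hvw
      exact absurd hvw (Fin.castSucc_lt_last (f₀ v)).ne
    · rw [if_neg h2, if_neg h3] at hvw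
      exact hf₀ v w h2 h3 hadj (Fin.castSucc_injective _ hvw)
  have hB2 : s₀.choose 2 ≤ B.card := pairs_le G I f₀ hf₀ (fun m hm => Nat.sInf_le hm)
  have hchoose : (DSI.chiJ G 1 - 1).choose 2 ≤ B.card :=
    le_trans (Nat.choose_le_choose 2 (by omega)) hB2
  -- conclude
  have hmem : I.card ∈ T := by
    refine ⟨Finset.card_le_univ I, ?_⟩
    have h1 := sumSmallest_le_sum G I
    have : DSI.esize G = G.edgeFinset.card := rfl
    omega
  have hTbdd : BddAbove T := ⟨Fintype.card V, fun k hk => hk.1⟩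
  exact le_csSup hTbdd hmem
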